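/- arXiv:2304.14575 — 2 statements merged into one kernel-verified Lean document; each statement's English description precedes it below -/
import Mathlib

section
/- There exists a predicate P on partial-recursive codes (Nat.Partrec.Code) such that: (i) P is extensional with respect to running time, i.e., for any two codes c₁, c₂, if for every input n the running time of c₁ on n equals the running time of c₂ on n (as elements of ℕ∞, where the running time of c on n is defined as the least fuel value k such that Nat.Partrec.Code.evaln k c n is some value, and ⊤ if no such k exists), then P c₁ ↔ P c₂; (ii) P is nontrivial, i.e., some code satisfies P and some code does not; and (iii) P is a computable predicate (ComputablePred P). (This refutes the claim that every nontrivial property of the time complexity of a program is undecidable.) -/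
/-- The running time of a partial-recursive code `c` on input `n`:
the least fuel `k` such that `Nat.Partrec.Code.evaln k c n` is `some`,
or `⊤` if `c` never halts on `n`. -/
noncomputable def timeToHalt (c : Nat.Partrec.Code) (n : ℕ) : ℕ∞ :=
  ⨅ (k : ℕ) (_ : (Nat.Partrec.Code.evaln k c n).isSome), (k : ℕ∞)

lemma timeToHalt_key (c : Nat.Partrec.Code) :
    (Nat.Partrec.Code.evaln 1 c 0).isSome ↔ timeToHalt c 0 < 2 := by
  constructor
  · intro h
    have h1 : timeToHalt c 0 ≤ (1 : ℕ∞) := iInf_le_of_le 1 (iInf_le_of_le h le_rfl)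
    exact lt_of_le_of_lt h1 (by norm_num)
  · intro h
    rw [timeToHalt, iInf_lt_iff] at h
    obtain ⟨k, hk⟩ := h
    rw [iInf_lt_iff] at hk
    obtain ⟨hs, hk2⟩ := hk
    have hk' : k < 2 := by exact_mod_cast hk2
    obtain ⟨x, hx⟩ := Option.isSome_iff_exists.mp hs
    have := Nat.Partrec.Code.evaln_mono (k₂ := 1) (by omega) hx
    exact Option.isSome_iff_exists.mpr ⟨x, this⟩

/-- There is a nontrivial, computable (decidable) property of codes that is
extensional with respect to running time. -/
theorem exists_nontrivial_computable_time_property :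
    ∃ P : Nat.Partrec.Code → Prop,
      (∀ c₁ c₂ : Nat.Partrec.Code,
          (∀ n : ℕ, timeToHalt c₁ n = timeToHalt c₂ n) → (P c₁ ↔ P c₂)) ∧
      (∃ c, P c) ∧ (∃ c, ¬ P c) ∧ ComputablePred P := by
  refine ⟨fun c => (Nat.Partrec.Code.evaln 1 c 0).isSome = true, ?_, ?_, ?_, ?_⟩
  · intro c₁ c₂ h
    simp only [eq_iff_iff, iff_true]
    rw [timeToHalt_key, timeToHalt_key, h 0]
  · exact ⟨Nat.Partrec.Code.zero, by simp [Nat.Partrec.Code.evaln]⟩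
  · exact ⟨Nat.Partrec.Code.rfind' Nat.Partrec.Code.succ, by simp [Nat.Partrec.Code.evaln, Nat.pair]⟩
  · refine ⟨fun c => instDecidableEqBool _ _, ?_⟩
    have : Computable fun c => (Nat.Partrec.Code.evaln 1 c 0).isSome :=
      (Primrec.option_isSome.comp
        (Nat.Partrec.Code.primrec_evaln.comp
          ((Primrec.const 1).pair Primrec.id |>.pair (Primrec.const 0)))).to_comp
    exact this.of_eq fun c => by simp
end

section
/- Let M be a Turing machine in Mathlib's TM0 model with step function step : Cfg → Option Cfg. If the computation starting from a configuration c₀ halts (i.e., some finite iterate of the step function from c₀ returns none), then all configurations occurring along the run from c₀ up to the halting point are pairwise distinct. -/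
/-- Iterate the TM0 step function `n` times from configuration `c`;
`none` means the machine halted at some point within the first `n` steps. -/
def multistep {Γ Λ : Type} [Inhabited Γ] [Inhabited Λ] (M : Turing.TM0.Machine Γ Λ)
    (c : Turing.TM0.Cfg Γ Λ) : ℕ → Option (Turing.TM0.Cfg Γ Λ)
  | 0 => some c
  | n + 1 => (multistep M c n).bind (Turing.TM0.step M)

/-- If the computation starting from `c₀` halts, then all configurations
occurring along the run up to the halting point are pairwise distinct. -/
theorem halting_run_configs_distinct {Γ Λ : Type} [Inhabited Γ] [Inhabited Λ]
    (M : Turing.TM0.Machine Γ Λ) (c₀ : Turing.TM0.Cfg Γ Λ)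
    (hhalt : ∃ t : ℕ, multistep M c₀ t = none) :
    ∀ (i j : ℕ) (ci cj : Turing.TM0.Cfg Γ Λ),
      multistep M c₀ i = some ci → multistep M c₀ j = some cj →
      i ≠ j → ci ≠ cj := by
  -- auxiliary facts
  have hadd : ∀ (c ci : Turing.TM0.Cfg Γ Λ) (m : ℕ), multistep M c m = some ci →
      ∀ k, multistep M c (m + k) = multistep M ci k := by
    intro c ci m hm k
    induction k with
    | zero => simpa [multistep] using hm
    | succ k ih => simp [multistep, ← Nat.add_assoc, ih]
  have hnone : ∀ (c : Turing.TM0.Cfg Γ Λ) (t s : ℕ), multistep M c t = none →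
      multistep M c (t + s) = none := by
    intro c t s ht
    induction s with
    | zero => simpa using ht
    | succ s ih => simp [multistep, ← Nat.add_assoc, ih]
  -- main
  suffices H : ∀ i j ci cj, i < j → multistep M c₀ i = some ci →
      multistep M c₀ j = some cj → ci ≠ cj by
    intro i j ci cj hi hj hne
    rcases Nat.lt_or_ge i j with h | h
    · exact H i j ci cj h hi hj
    · exact fun e => H j i cj ci (lt_of_le_of_ne h (Ne.symm hne)) hj hi e.symm
  intro i j ci cj hij hi hj heq
  subst heq
  obtain ⟨t, ht⟩ := hhalt
  set p := j - i with hp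
  have hp0 : 0 < p := Nat.sub_pos_of_lt hij
  have hcyc : multistep M ci p = some ci := by
    have := hadd c₀ ci i hi p
    rw [hp, Nat.add_sub_cancel' hij.le] at this
    rw [← this, hj]
  have hrep : ∀ k, multistep M ci (k * p) = some ci := by
    intro k
    induction k with
    | zero => simp [multistep]
    | succ k ih =>
      have := hadd ci ci (k * p) ih p
      rw [← this] at hcyc
      simpa [Nat.succ_mul] using hcyc
  have hsome : multistep M c₀ (i + t * p) = some ci := by
    rw [hadd c₀ ci i hi (t * p), hrep t]
  have hle : t ≤ i + t * p := le_trans (Nat.le_mul_of_pos_right t hp0) (Nat.le_add_left _ _)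
  have := hnone c₀ t (i + t * p - t) ht
  rw [Nat.add_sub_cancel' hle, hsome] at this
  exact nomatch this
end
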